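/- arXiv:2012.06535 — 2 statements merged into one kernel-verified Lean document; each statement's English description precedes it below -/
import Mathlib

section
/- Let (X,d) be a metric space. The following are equivalent: (a) (X,d) is complete; (b) whenever f : (X,d) → ℝ is a locally Lipschitz TB-regular function such that f(x) ≠ 0 for all x ∈ X, the function 1/f is also locally Lipschitz and TB-regular; (c) whenever f : (X,d) → ℝ is a continuous TB-regular function such that f(x) ≠ 0 for all x ∈ X, the function 1/f is also continuous and TB-regular. -/
universe u

/-- `f` is TB-regular if it maps totally bounded sets to totally bounded sets. -/
def TBRegular {X : Type u} {Y : Type*} [MetricSpace X] [MetricSpace Y] (f : X → Y) : Prop :=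
  ∀ A : Set X, TotallyBounded A → TotallyBounded (f '' A)

/-- `f` is locally Lipschitz if each point has an open ball around it on which `f` is
Lipschitz. -/
def LocallyLip {X : Type u} {Y : Type*} [MetricSpace X] [MetricSpace Y] (f : X → Y) : Prop :=
  ∀ x : X, ∃ δ > (0 : ℝ), ∃ K : NNReal, LipschitzOnWith K f (Metric.ball x δ)

lemma LocallyLip.continuous {X : Type u} [MetricSpace X] {f : X → ℝ} (hf : LocallyLip f) :
    Continuous f := by
  rw [continuous_iff_continuousAt]
  intro x
  obtain ⟨δ, hδ, K, hK⟩ := hf x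
  exact hK.continuousOn.continuousAt (Metric.ball_mem_nhds x hδ)

/-- Inverse of a nonvanishing locally Lipschitz function is locally Lipschitz. -/
lemma locallyLip_inv {X : Type u} [MetricSpace X] {f : X → ℝ} (hf : LocallyLip f)
    (hne : ∀ x : X, f x ≠ 0) : LocallyLip (fun x => (f x)⁻¹) := by
  intro x
  obtain ⟨δ, hδ, K, hK⟩ := hf x
  set c : ℝ := |f x| / 2 with hc
  have hc0 : 0 < c := div_pos (abs_pos.2 (hne x)) two_pos
  have hcont : ContinuousAt f x := hf.continuous.continuousAt
  obtain ⟨δ₁, hδ₁, hball⟩ := Metric.continuousAt_iff.1 hcont c hc0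
  refine ⟨min δ δ₁, lt_min hδ hδ₁, K * (Real.toNNReal c⁻¹) ^ 2, ?_⟩
  have hlow : ∀ y ∈ Metric.ball x (min δ δ₁), c ≤ |f y| := by
    intro y hy
    have : dist (f y) (f x) < c := hball (lt_of_lt_of_le (Metric.mem_ball.1 hy) (min_le_right _ _))
    have habs : |f y - f x| < c := by rwa [Real.dist_eq] at this
    have := abs_sub_abs_le_abs_sub (f x) (f y)
    have h1 : |f x - f y| < c := by rwa [abs_sub_comm]
    have : |f x| - |f y| < c := lt_of_le_of_lt this h1
    have : |f x| - c < |f y| := by linarith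
    have : c < |f y| := by
      rw [hc] at this ⊢
      linarith
    linarith
  rw [lipschitzOnWith_iff_dist_le_mul]
  intro y hy z hz
  have hyb : y ∈ Metric.ball x δ := Metric.mem_ball.1 hy |> fun h => Metric.mem_ball.2 (lt_of_lt_of_le h (min_le_left _ _))
  have hzb : z ∈ Metric.ball x δ := Metric.mem_ball.1 hz |> fun h => Metric.mem_ball.2 (lt_of_lt_of_le h (min_le_left _ _))
  have hKd : dist (f y) (f z) ≤ K * dist y z := lipschitzOnWith_iff_dist_le_mul.1 hK y hyb z hzb
  have hcy : c ≤ |f y| := hlow y hy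
  have hcz : c ≤ |f z| := hlow z hz
  have hfy : f y ≠ 0 := hne y
  have hfz : f z ≠ 0 := hne z
  have key : dist (f y)⁻¹ (f z)⁻¹ ≤ dist (f y) (f z) / (c * c) := by
    rw [Real.dist_eq, Real.dist_eq, inv_sub_inv hfy hfz, abs_div, abs_mul,
      abs_sub_comm (f z) (f y)]
    exact div_le_div₀ (abs_nonneg _) le_rfl (mul_pos hc0 hc0)
      (mul_le_mul hcy hcz hc0.le (abs_nonneg _))
  have hcoe : ((K * (Real.toNNReal c⁻¹) ^ 2 : NNReal) : ℝ) = (K : ℝ) * (c⁻¹) ^ 2 := by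
    push_cast
    rw [Real.coe_toNNReal _ (by positivity)]
  calc dist (f y)⁻¹ (f z)⁻¹ ≤ dist (f y) (f z) / (c * c) := key
    _ ≤ (K * dist y z) / (c * c) := by gcongr
    _ = ((K * (Real.toNNReal c⁻¹) ^ 2 : NNReal) : ℝ) * dist y z := by
        rw [hcoe, sq, ← mul_inv, div_eq_mul_inv]; ring

/-- In a complete space, the inverse of a nonvanishing continuous function is TB-regular. -/
lemma tbRegular_inv_of_complete {X : Type u} [MetricSpace X] [CompleteSpace X] {f : X → ℝ}
    (hf : Continuous f) (hne : ∀ x : X, f x ≠ 0) : TBRegular (fun x => (f x)⁻¹) := by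
  intro A hA
  rcases A.eq_empty_or_nonempty with rfl | hAne
  · simp [totallyBounded_empty]
  have hKc : IsCompact (closure A) :=
    TotallyBounded.isCompact_of_isClosed hA.closure isClosed_closure
  have hKne : (closure A).Nonempty := hAne.closure
  obtain ⟨a, _, ha⟩ := hKc.exists_isMinOn hKne ((continuous_abs.comp hf).continuousOn)
  set c : ℝ := |f a| with hc
  have hc0 : 0 < c := abs_pos.2 (hne a)
  have hsub : (fun x => (f x)⁻¹) '' A ⊆ Set.Icc (-(c⁻¹)) c⁻¹ := by
    rintro _ ⟨y, hy, rfl⟩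
    have hcy : c ≤ |f y| := isMinOn_iff.1 ha y (subset_closure hy)
    have h1 : |(f y)⁻¹| ≤ c⁻¹ := by
      rw [abs_inv]
      exact inv_anti₀ hc0 hcy
    exact abs_le.1 h1
  exact (totallyBounded_Icc _ _).subset hsub

/-- Counterexample in an incomplete space. -/
lemma exists_bad_function {X : Type u} [MetricSpace X] (h : ¬ CompleteSpace X) :
    ∃ f : X → ℝ, LipschitzWith 1 f ∧ TBRegular f ∧ (∀ x : X, f x ≠ 0) ∧
      ¬ TBRegular (fun x => (f x)⁻¹) := by
  have : ¬ ∀ (u : ℕ → X), CauchySeq u → ∃ a, Filter.Tendsto u Filter.atTop (nhds a) := by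
    intro hu; exact h (Metric.complete_of_cauchySeq_tendsto hu)
  push_neg at this
  obtain ⟨u, hu, hnolim⟩ := this
  set C := UniformSpace.Completion X
  have hiso : Isometry ((↑) : X → C) := UniformSpace.Completion.coe_isometry
  have hv : CauchySeq (fun n => (u n : C)) :=
    hu.map hiso.uniformContinuous
  obtain ⟨ξ, hξ⟩ := cauchySeq_tendsto_of_complete hv
  refine ⟨fun x => dist (x : C) ξ, ?_, ?_, ?_, ?_⟩
  · have h1 : LipschitzWith 1 (fun y : C => dist y ξ) := LipschitzWith.dist_left ξ
    have := h1.comp hiso.lipschitz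
    rw [mul_one] at this
    exact this
  · intro A hA
    exact hA.image ((LipschitzWith.dist_left ξ).comp hiso.lipschitz).uniformContinuous
  · intro x hx
    apply hnolim x
    rw [tendsto_iff_dist_tendsto_zero]
    have hdist : ∀ n, dist (u n) x = dist ((u n : C)) ξ := by
      intro n
      rw [← hiso.dist_eq, ← dist_eq_zero.1 hx]
    simp only [hdist]
    have := tendsto_iff_dist_tendsto_zero.1 hξ
    exact this
  · intro hbad
    have hrange : TotallyBounded (Set.range u) := hu.totallyBounded_range
    have himg := hbad (Set.range u) hrange
    obtain ⟨M, hM⟩ := isBounded_iff_forall_norm_le.1 himg.isBounded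
    have hpos : ∀ n, 0 < dist ((u n : C)) ξ := by
      intro n
      rcases (dist_nonneg : (0:ℝ) ≤ dist ((u n : C)) ξ).lt_or_eq with h' | h'
      · exact h'
      · exfalso
        apply hnolim (u n)
        rw [tendsto_iff_dist_tendsto_zero]
        have hdist : ∀ m, dist (u m) (u n) = dist ((u m : C)) ξ := by
          intro m
          rw [← hiso.dist_eq, ← dist_eq_zero.1 h'.symm]
        simp only [hdist]
        exact tendsto_iff_dist_tendsto_zero.1 hξ
    have hM0 : 0 ≤ M := le_trans (norm_nonneg _) (hM _ ⟨u 0, ⟨0, rfl⟩, rfl⟩)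
    have htend : Filter.Tendsto (fun n => dist ((u n : C)) ξ) Filter.atTop (nhds 0) :=
      tendsto_iff_dist_tendsto_zero.1 hξ
    obtain ⟨n, hn⟩ := (Metric.tendsto_atTop.1 htend (M + 1)⁻¹ (by positivity)) |>.imp
      (fun n hn => hn n le_rfl) |> fun h => h
    have hn' : dist ((u n : C)) ξ < (M + 1)⁻¹ := by
      rw [Real.dist_eq, sub_zero, abs_of_pos (hpos n)] at hn
      exact hn
    have hinv : M + 1 < (dist ((u n : C)) ξ)⁻¹ := by
      have := (inv_strictAnti₀ (hpos n) hn')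
      rwa [inv_inv] at this
    have hmem : (dist ((u n : C)) ξ)⁻¹ ∈ (fun x : X => (dist (x : C) ξ)⁻¹) '' Set.range u :=
      Set.mem_image_of_mem _ (Set.mem_range_self n)
    have := hM _ hmem
    rw [Real.norm_eq_abs, abs_of_pos (inv_pos.2 (hpos n))] at this
    linarith

theorem complete_iff_reciprocal_tbRegular {X : Type u} [MetricSpace X] :
    List.TFAE
      [CompleteSpace X,
       ∀ f : X → ℝ, LocallyLip f → TBRegular f → (∀ x : X, f x ≠ 0) →
         (LocallyLip (fun x => (f x)⁻¹) ∧ TBRegular (fun x => (f x)⁻¹)),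
       ∀ f : X → ℝ, Continuous f → TBRegular f → (∀ x : X, f x ≠ 0) →
         (Continuous (fun x => (f x)⁻¹) ∧ TBRegular (fun x => (f x)⁻¹))] := by
  tfae_have 1 → 2
  | h, f, hlip, _, hne => by
    exact ⟨locallyLip_inv hlip hne, tbRegular_inv_of_complete hlip.continuous hne⟩
  tfae_have 1 → 3
  | h, f, hcont, _, hne => by
    exact ⟨hcont.inv₀ hne, tbRegular_inv_of_complete hcont hne⟩
  tfae_have 2 → 1
  | h2 => by
    by_contra hnc
    obtain ⟨f, hlip, htb, hne, hbad⟩ := exists_bad_function hnc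
    have hloc : LocallyLip f := fun x => ⟨1, one_pos, 1, hlip.lipschitzOnWith⟩
    exact hbad (h2 f hloc htb hne).2
  tfae_have 3 → 1
  | h3 => by
    by_contra hnc
    obtain ⟨f, hlip, htb, hne, hbad⟩ := exists_bad_function hnc
    exact hbad (h3 f hlip.continuous htb hne).2
  tfae_finish
end

section
/- Let (X,d) be a metric space and let A be a nonempty subset of X. Then the following are equivalent: (a) A is a UC set, i.e., every sequence (aₙ) in A with I(aₙ) → 0 has a cluster point in X, where I(x) = d(x, X \ {x}); (b) whenever f : (X,d) → ℝ is a continuous function with f(x) ≠ 0 for all x ∈ X such that f is strongly uniformly continuous on A, then 1/f is also strongly uniformly continuous on A. -/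
universe u v

open Filter

/-- The isolation functional `I x = d(x, X \ {x})`. -/
noncomputable def isolFn {X : Type u} [MetricSpace X] (x : X) : ℝ :=
  Metric.infDist x {y : X | y ≠ x}

/-- `A` is a UC set if every sequence in `A` whose isolation functional tends to `0`
has a cluster point in `X`. -/
def UCSet {X : Type u} [MetricSpace X] (A : Set X) : Prop :=
  ∀ a : ℕ → X, (∀ n, a n ∈ A) →
    Tendsto (fun n => isolFn (a n)) atTop (nhds 0) → ∃ p : X, MapClusterPt p atTop a

/-- `f` is strongly uniformly continuous on `B` if for every `ε > 0` there is a `δ > 0` such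
that whenever `dist x y < δ` and `{x, y} ∩ B ≠ ∅`, we have `dist (f x) (f y) < ε`. -/
def StrongUnifContOn {X : Type u} {Y : Type v} [MetricSpace X] [MetricSpace Y]
    (f : X → Y) (B : Set X) : Prop :=
  ∀ ε > (0 : ℝ), ∃ δ > (0 : ℝ), ∀ x y : X,
    dist x y < δ → (x ∈ B ∨ y ∈ B) → dist (f x) (f y) < ε

lemma clusterPt_of_subseq {X : Type u} [MetricSpace X] {a : ℕ → X} {φ : ℕ → ℕ}
    (hφ : StrictMono φ) {p : X} (h : Tendsto (fun m => a (φ m)) atTop (nhds p)) :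
    MapClusterPt p atTop a := by
  have h1 : map (a ∘ φ) atTop ≤ map a atTop := by
    rw [← Filter.map_map]
    exact Filter.map_mono hφ.tendsto_atTop
  have h2 : map (a ∘ φ) atTop ≤ nhds p ⊓ map a atTop := le_inf h h1
  exact Filter.neBot_of_le h2

lemma exists_strictMono_mem {s : Set ℕ} (hs : s.Infinite) :
    ∃ τ : ℕ → ℕ, StrictMono τ ∧ ∀ i, τ i ∈ s := by
  have step : ∀ m : ℕ, ∃ n, n ∈ s ∧ m < n := fun m => (hs.exists_gt m).imp (by tauto)
  set τ : ℕ → ℕ := fun k => Nat.rec (Classical.choose (step 0)) (fun _ pk => Classical.choose (step pk)) k with hτ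
  have hmem : ∀ k, τ k ∈ s := by
    intro k; cases k with
    | zero => exact (Classical.choose_spec (step 0)).1
    | succ k => exact (Classical.choose_spec (step (τ k))).1
  have hmono : StrictMono τ := strictMono_nat_of_lt_succ fun k =>
    (Classical.choose_spec (step (τ k))).2
  exact ⟨τ, hmono, hmem⟩

lemma exists_sep_subseq {X : Type u} [MetricSpace X] (u : ℕ → X) (e : ℝ)
    (hfin : ∀ p : X, {n | dist (u n) p < e}.Finite) :
    ∃ ψ : ℕ → ℕ, StrictMono ψ ∧ ∀ i j, i < j → e ≤ dist (u (ψ i)) (u (ψ j)) := by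
  have step : ∀ m : ℕ, ∃ n, m < n ∧ ∀ n' ≤ m, e ≤ dist (u n) (u n') := by
    intro m
    have hfin2 : ({n | n ≤ m} ∪ ⋃ n' ∈ Finset.range (m+1), {n | dist (u n) (u n') < e}).Finite := by
      apply Set.Finite.union (Set.finite_le_nat m)
      apply Set.Finite.biUnion (Finset.range (m+1)).finite_toSet
      intro n' _; exact hfin (u n')
    obtain ⟨n, hn⟩ := hfin2.infinite_compl.nonempty
    simp only [Set.mem_compl_iff, Set.mem_union, Set.mem_setOf_eq, Set.mem_iUnion,
      Finset.mem_coe, Finset.mem_range, not_or, not_exists, not_lt, not_le] at hn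
    exact ⟨n, hn.1, fun n' hn' => hn.2 n' (Nat.lt_succ_of_le hn')⟩
  set ψ : ℕ → ℕ := fun k => Nat.rec 0 (fun _ pk => Classical.choose (step pk)) k with hψ
  have hmono : StrictMono ψ := strictMono_nat_of_lt_succ fun k =>
    (Classical.choose_spec (step (ψ k))).1
  refine ⟨ψ, hmono, fun i j hij => ?_⟩
  obtain ⟨j', rfl⟩ : ∃ j', j = j' + 1 := ⟨j - 1, by omega⟩
  have hle : ψ i ≤ ψ j' := hmono.monotone (by omega)
  have := (Classical.choose_spec (step (ψ j'))).2 (ψ i) hle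
  rw [dist_comm]; exact this


lemma cauchy_or_separated {X : Type u} [MetricSpace X] (a : ℕ → X) :
    (∃ e > (0:ℝ), ∃ φ : ℕ → ℕ, StrictMono φ ∧ ∀ i j, i < j → e ≤ dist (a (φ i)) (a (φ j)))
    ∨ (∃ φ : ℕ → ℕ, StrictMono φ ∧ CauchySeq (a ∘ φ)) := by
  by_cases hB : ∃ e > (0:ℝ), ∃ φ : ℕ → ℕ, StrictMono φ ∧ ∀ i j, i < j → e ≤ dist (a (φ i)) (a (φ j))
  · exact Or.inl hB
  right
  push_neg at hB
  have key : ∀ (χ : ℕ → ℕ), StrictMono χ → ∀ k : ℕ,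
      ∃ τ : ℕ → ℕ, StrictMono τ ∧ ∀ i j, dist (a (χ (τ i))) (a (χ (τ j))) < 2/(k+1) := by
    intro χ hχ k
    have hkpos : (0:ℝ) < 1/(k+1) := by positivity
    by_cases hfin : ∀ p : X, {n | dist (a (χ n)) p < 1/(k+1)}.Finite
    · exfalso
      obtain ⟨ψ, hψ, hsep⟩ := exists_sep_subseq (fun n => a (χ n)) (1/(k+1)) hfin
      obtain ⟨i, j, hij, hd⟩ := hB (1/(k+1)) hkpos (χ ∘ ψ) (hχ.comp hψ)
      exact absurd (hsep i j hij) (by simpa using not_le.mpr hd)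
    · push_neg at hfin
      obtain ⟨p, hp⟩ := hfin
      obtain ⟨τ, hτ, hmem⟩ := exists_strictMono_mem hp
      refine ⟨τ, hτ, fun i j => ?_⟩
      have h1 := hmem i; have h2 := hmem j
      simp only [Set.mem_setOf_eq] at h1 h2
      calc dist (a (χ (τ i))) (a (χ (τ j))) ≤ dist (a (χ (τ i))) p + dist (a (χ (τ j))) p :=
            dist_triangle_right _ _ _
        _ < 1/(k+1) + 1/(k+1) := by linarith
        _ = 2/(k+1) := by ring
  choose T hT1 hT2 using key
  let G : ℕ → {f : ℕ → ℕ // StrictMono f} := fun k =>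
    Nat.rec ⟨id, strictMono_id⟩ (fun k g => ⟨g.1 ∘ T g.1 g.2 k, g.2.comp (hT1 g.1 g.2 k)⟩) k
  have hGsucc : ∀ k, (G (k+1)).1 = (G k).1 ∘ T (G k).1 (G k).2 k := fun k => rfl
  have hGdist : ∀ k i j, dist (a ((G (k+1)).1 i)) (a ((G (k+1)).1 j)) < 2/(k+1) := by
    intro k i j
    rw [hGsucc k]
    exact hT2 (G k).1 (G k).2 k i j
  have hGfact : ∀ k l, k ≤ l → ∃ σ : ℕ → ℕ, (G l).1 = (G k).1 ∘ σ := by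
    intro k l hkl
    induction l, hkl using Nat.le_induction with
    | base => exact ⟨id, rfl⟩
    | succ l hkl ih =>
      obtain ⟨σ, hσ⟩ := ih
      refine ⟨σ ∘ T (G l).1 (G l).2 l, funext fun i => ?_⟩
      show (G l).1 (T (G l).1 (G l).2 l i) = _
      exact congrFun hσ _
  set n : ℕ → ℕ := fun k => (G k).1 k with hn
  have hmono : StrictMono n := by
    apply strictMono_nat_of_lt_succ
    intro k
    have h1 : n (k+1) = (G k).1 (T (G k).1 (G k).2 k (k+1)) := rfl
    rw [h1]
    have : k + 1 ≤ T (G k).1 (G k).2 k (k+1) := (hT1 (G k).1 (G k).2 k).le_apply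
    calc (G k).1 k < (G k).1 (k+1) := (G k).2 (by omega)
      _ ≤ (G k).1 (T (G k).1 (G k).2 k (k+1)) := (G k).2.monotone this
  refine ⟨n, hmono, ?_⟩
  rw [Metric.cauchySeq_iff]
  intro ε hε
  obtain ⟨k, hk⟩ := exists_nat_gt (2/ε)
  have hk2 : 2/(k+1) < ε := by
    rw [div_lt_iff₀ (by positivity)]
    rw [div_lt_iff₀ hε] at hk
    nlinarith
  refine ⟨k+1, fun l hl l' hl' => ?_⟩
  obtain ⟨σ, hσ⟩ := hGfact (k+1) l hl
  obtain ⟨σ', hσ'⟩ := hGfact (k+1) l' hl'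
  have : dist (a (n l)) (a (n l')) < 2/(k+1) := by
    show dist (a ((G l).1 l)) (a ((G l').1 l')) < _
    rw [hσ, hσ']
    exact hGdist k (σ l) (σ' l')
  calc dist ((a ∘ n) l) ((a ∘ n) l') < 2/(k+1) := this
    _ < ε := hk2


lemma suc_of_lip {X : Type u} [MetricSpace X] {f : X → ℝ} (hf : LipschitzWith 1 f)
    (A : Set X) : StrongUnifContOn f A := by
  intro ε hε
  refine ⟨ε, hε, fun x y hxy _ => ?_⟩
  calc dist (f x) (f y) ≤ 1 * dist x y := hf.dist_le_mul x y
    _ < ε := by simpa using hxy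


lemma forward {X : Type u} [MetricSpace X] {A : Set X} (hUC : UCSet A)
    (f : X → ℝ) (hc : Continuous f) (hnz : ∀ x, f x ≠ 0) :
    StrongUnifContOn (fun x => (f x)⁻¹) A := by
  by_contra h
  unfold StrongUnifContOn at h
  push_neg at h
  obtain ⟨ε, hε, H⟩ := h
  have Hn : ∀ n : ℕ, ∃ x y : X, dist x y < 1/(n+1) ∧ (x ∈ A ∨ y ∈ A) ∧
      ε ≤ dist (f x)⁻¹ (f y)⁻¹ := by
    intro n
    obtain ⟨x, y, h1, h2, h3⟩ := H (1/(n+1)) (by positivity)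
    exact ⟨x, y, h1, h2, h3⟩
  choose x y hd hm hge using Hn
  classical
  set b : ℕ → X := fun n => if x n ∈ A then x n else y n with hb
  set b' : ℕ → X := fun n => if x n ∈ A then y n else x n with hb'
  have hbA : ∀ n, b n ∈ A := by
    intro n; rw [hb]; dsimp only
    split_ifs with h
    · exact h
    · exact (hm n).resolve_left h
  have hbd : ∀ n, dist (b n) (b' n) < 1/(n+1) := by
    intro n; rw [hb, hb']; dsimp only
    split_ifs
    · exact hd n
    · rw [dist_comm]; exact hd n
  have hbg : ∀ n, ε ≤ dist (f (b n))⁻¹ (f (b' n))⁻¹ := by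
    intro n; rw [hb, hb']; dsimp only
    split_ifs
    · exact hge n
    · rw [dist_comm]; exact hge n
  have hne : ∀ n, b' n ≠ b n := by
    intro n heq
    have := hbg n
    rw [heq] at this
    simp at this
    linarith
  have hiso : Tendsto (fun n => isolFn (b n)) atTop (nhds 0) := by
    apply squeeze_zero (fun n => Metric.infDist_nonneg)
      (fun n => ?_) tendsto_one_div_add_atTop_nhds_zero_nat
    exact le_of_lt (lt_of_le_of_lt (Metric.infDist_le_dist_of_mem (hne n)) (hbd n))
  obtain ⟨p, hp⟩ := hUC b hbA hiso
  have hcont : ContinuousAt (fun z => (f z)⁻¹) p := (hc.continuousAt).inv₀ (hnz p)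
  rw [Metric.continuousAt_iff] at hcont
  obtain ⟨r, hr, hr2⟩ := hcont (ε/2) (by linarith)
  have hfreq : ∃ᶠ n in atTop, dist (b n) p < r/2 := by
    rw [mapClusterPt_iff_frequently] at hp
    exact hp (Metric.ball p (r/2)) (Metric.ball_mem_nhds p (by linarith))
  have hev : ∀ᶠ n : ℕ in atTop, 1/((n:ℝ)+1) < r/2 := by
    have := tendsto_one_div_add_atTop_nhds_zero_nat.eventually_lt_const (show (0:ℝ) < r/2 by linarith)
    exact this
  obtain ⟨n, h1, h2⟩ := (hfreq.and_eventually hev).exists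
  have hb'p : dist (b' n) p < r := by
    calc dist (b' n) p ≤ dist (b' n) (b n) + dist (b n) p := dist_triangle _ _ _
      _ < 1/(n+1) + r/2 := by rw [dist_comm]; exact add_lt_add (hbd n) h1
      _ < r := by linarith
  have e1 := hr2 (lt_of_lt_of_le h1 (by linarith) : dist (b n) p < r)
  have e2 := hr2 hb'p
  have : dist (f (b n))⁻¹ (f (b' n))⁻¹ < ε := by
    calc dist (f (b n))⁻¹ (f (b' n))⁻¹ ≤ _ + _ := dist_triangle _ ((f p)⁻¹) _
      _ < ε/2 + ε/2 := add_lt_add e1 (by rw [dist_comm]; exact e2)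
      _ = ε := by ring
  exact absurd (hbg n) (not_le.mpr this)


/-- Case A: a Cauchy subsequence with no limit gives a counterexample `f`. -/
lemma caseA {X : Type u} [MetricSpace X] {A : Set X} {c : ℕ → X}
    (hcA : ∀ m, c m ∈ A) (hcauchy : CauchySeq c)
    (hnl : ∀ p : X, ¬ Tendsto c atTop (nhds p)) :
    ∃ f : X → ℝ, Continuous f ∧ (∀ x, f x ≠ 0) ∧ StrongUnifContOn f A ∧
      ¬ StrongUnifContOn (fun x => (f x)⁻¹) A := by
  set Y := UniformSpace.Completion X
  have hcc : CauchySeq (fun m => ((c m : Y))) :=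
    (UniformSpace.Completion.uniformContinuous_coe X).comp_cauchySeq hcauchy
  obtain ⟨ξ, hξ⟩ := cauchySeq_tendsto_of_complete hcc
  have hne2 : ∀ x : X, ((x : Y)) ≠ ξ := by
    intro x hx
    apply hnl x
    rw [tendsto_iff_dist_tendsto_zero]
    have : Tendsto (fun m => dist ((c m : Y)) ξ) atTop (nhds (dist ξ ξ)) :=
      hξ.dist tendsto_const_nhds
    rw [dist_self] at this
    convert this using 2 with m
    rw [← hx, UniformSpace.Completion.dist_eq]
  set f : X → ℝ := fun x => min 1 (dist ((x : Y)) ξ) with hfdef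
  have hlip : LipschitzWith 1 f := by
    have h1 : LipschitzWith 1 (fun x : X => dist ((x : Y)) ξ) := by
      have := (LipschitzWith.dist_right ξ).comp
        (UniformSpace.Completion.coe_isometry (α := X)).lipschitz
      simp only [one_mul] at this
      convert this using 2 with x
      · rfl
      exact dist_comm _ _
    have := (LipschitzWith.const (α := X) (1:ℝ)).min h1
    simpa using this
  have hpos : ∀ x, 0 < f x := fun x => lt_min one_pos (dist_pos.mpr (hne2 x))
  refine ⟨f, hlip.continuous, fun x => (hpos x).ne', suc_of_lip hlip A, ?_⟩
  intro hsuc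
  obtain ⟨δ, hδ, hδ2⟩ := hsuc 1 one_pos
  set u : ℕ → ℝ := fun m => dist ((c m : Y)) ξ with hu
  have hu0 : Tendsto u atTop (nhds 0) := by
    have : Tendsto u atTop (nhds (dist ξ ξ)) := hξ.dist tendsto_const_nhds
    rwa [dist_self] at this
  have hupos : ∀ m, 0 < u m := fun m => dist_pos.mpr (hne2 (c m))
  obtain ⟨k, hk⟩ := (hu0.eventually_lt_const (show (0:ℝ) < min (δ/4) (1/2) by
    apply lt_min <;> linarith)).exists
  obtain ⟨l, hl⟩ := (hu0.eventually_lt_const (show (0:ℝ) < u k / 3 by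
    have := hupos k; linarith)).exists
  have hk1 : u k < δ/4 := lt_of_lt_of_le hk (min_le_left _ _)
  have hk2 : u k < 1/2 := lt_of_lt_of_le hk (min_le_right _ _)
  have hlk : u l < u k := by have := hupos k; linarith
  have hdkl : dist (c k) (c l) < δ := by
    rw [← UniformSpace.Completion.dist_eq (c k) (c l)]
    calc dist ((c k : Y)) ((c l : Y)) ≤ dist ((c k : Y)) ξ + dist ((c l : Y)) ξ :=
        dist_triangle_right _ _ _
      _ = u k + u l := rfl
      _ < δ := by linarith
  have hfk : f (c k) = u k := min_eq_right (by linarith)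
  have hfl : f (c l) = u l := min_eq_right (by linarith)
  have hbig : (1:ℝ) ≤ dist (f (c k))⁻¹ (f (c l))⁻¹ := by
    rw [hfk, hfl, Real.dist_eq, abs_sub_comm]
    have h1 : (u k / 3)⁻¹ ≤ (u l)⁻¹ := inv_anti₀ (hupos l) (le_of_lt hl)
    rw [show (u k / 3)⁻¹ = 3 / u k from inv_div _ _] at h1
    have h2 : (u k)⁻¹ = 1 / u k := (one_div _).symm
    have h3 : (4:ℝ) ≤ 2 / u k := by
      rw [le_div_iff₀ (hupos k)]; linarith
    have h4 : 3 / u k - 1 / u k = 2 / u k := by ring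
    have : (1:ℝ) ≤ (u l)⁻¹ - (u k)⁻¹ := by
      rw [h2]; linarith
    calc (1:ℝ) ≤ (u l)⁻¹ - (u k)⁻¹ := this
      _ ≤ |(u l)⁻¹ - (u k)⁻¹| := le_abs_self _
  exact absurd (hδ2 (c k) (c l) hdkl (Or.inl (hcA k))) (not_lt.mpr hbig)


/-- Case B: a uniformly separated subsequence with isolation tending to zero gives a
counterexample `f`. -/
lemma caseB {X : Type u} [MetricSpace X] {A : Set X} {c : ℕ → X} {e : ℝ} (he : 0 < e)
    (hcA : ∀ m, c m ∈ A) (hsep : ∀ i j, i ≠ j → e ≤ dist (c i) (c j))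
    (hisos : ∀ m, isolFn (c m) < min (e/4) 1)
    (hiso0 : Tendsto (fun m => isolFn (c m)) atTop (nhds 0))
    (hnonempty : ∀ m, Set.Nonempty {y : X | y ≠ c m}) :
    ∃ f : X → ℝ, Continuous f ∧ (∀ x, f x ≠ 0) ∧ StrongUnifContOn f A ∧
      ¬ StrongUnifContOn (fun x => (f x)⁻¹) A := by
  -- choose companion points
  have hbex : ∀ m : ℕ, ∃ b : X, b ≠ c m ∧
      dist (c m) b < min (isolFn (c m) + 1/(m+1)) (min (e/4) 1) := by
    intro m
    have hlt : Metric.infDist (c m) {y : X | y ≠ c m} <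
        min (isolFn (c m) + 1/(m+1)) (min (e/4) 1) := by
      apply lt_min
      · have : (0:ℝ) < 1/(m+1) := by positivity
        show isolFn (c m) < _
        linarith
      · exact hisos m
    obtain ⟨b, hb1, hb2⟩ := (Metric.infDist_lt_iff (hnonempty m)).mp hlt
    exact ⟨b, hb1, hb2⟩
  choose b hbne hbd using hbex
  set d : ℕ → ℝ := fun m => dist (c m) (b m) with hd
  have hdpos : ∀ m, 0 < d m := fun m => dist_pos.mpr (Ne.symm (hbne m))
  have hde : ∀ m, d m < e/4 := fun m =>
    lt_of_lt_of_le (hbd m) (le_trans (min_le_right _ _) (min_le_left _ _))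
  have hd1 : ∀ m, d m ≤ 1 := fun m =>
    le_of_lt (lt_of_lt_of_le (hbd m) (le_trans (min_le_right _ _) (min_le_right _ _)))
  have hdsmall : ∀ m, d m < isolFn (c m) + 1/(m+1) :=
    fun m => lt_of_lt_of_le (hbd m) (min_le_left _ _)
  set t : ℕ → ℝ := fun m => d m / 4 with ht
  have htpos : ∀ m, 0 < t m := fun m => by have := hdpos m; simp only [ht]; linarith
  set F : X → ℝ := fun x => ⨅ m, (t m + dist x (c m)) with hF
  have hbdd : ∀ x : X, BddBelow (Set.range fun m => t m + dist x (c m)) := by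
    intro x
    refine ⟨0, fun r hr => ?_⟩
    obtain ⟨m, rfl⟩ := hr
    have := (htpos m).le
    have := dist_nonneg (x := x) (y := c m)
    positivity
  have hFle : ∀ x m, F x ≤ t m + dist x (c m) := fun x m => ciInf_le (hbdd x) m
  have hlipF : LipschitzWith 1 F := by
    apply LipschitzWith.of_dist_le_mul
    intro x y
    rw [NNReal.coe_one, one_mul, Real.dist_eq, abs_sub_le_iff]
    constructor
    · rw [sub_le_iff_le_add, ← sub_le_iff_le_add']
      apply le_ciInf
      intro m
      have h1 := hFle x m
      have h2 : dist x (c m) ≤ dist x y + dist y (c m) := dist_triangle _ _ _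
      linarith
    · rw [sub_le_iff_le_add, ← sub_le_iff_le_add']
      apply le_ciInf
      intro m
      have h1 := hFle y m
      have h2 : dist y (c m) ≤ dist y x + dist x (c m) := dist_triangle _ _ _
      rw [dist_comm y x] at h2
      linarith
  have hFpos : ∀ x, 0 < F x := by
    intro x
    by_cases hx : ∃ m₀, dist x (c m₀) < e/2
    · obtain ⟨m₀, hm₀⟩ := hx
      have : min (t m₀) (e/2) ≤ F x := by
        apply le_ciInf
        intro m
        rcases eq_or_ne m m₀ with rfl | hne
        · have := dist_nonneg (x := x) (y := c m)
          have := min_le_left (t m) (e/2)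
          linarith
        · have hsepm := hsep m m₀ hne
          have htri : dist (c m) (c m₀) ≤ dist x (c m) + dist x (c m₀) :=
            dist_triangle_left _ _ _
          have : e/2 ≤ dist x (c m) := by linarith
          have := min_le_right (t m₀) (e/2)
          have := (htpos m).le
          linarith
      have : 0 < min (t m₀) (e/2) := lt_min (htpos m₀) (by linarith)
      linarith
    · push_neg at hx
      have : e/2 ≤ F x := by
        apply le_ciInf
        intro m
        have := hx m
        have := (htpos m).le
        linarith
      linarith
  set f : X → ℝ := fun x => min 1 (F x) with hfdef
  have hlip : LipschitzWith 1 f := by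
    have := (LipschitzWith.const (α := X) (1:ℝ)).min hlipF
    simpa using this
  have hpos : ∀ x, 0 < f x := fun x => lt_min one_pos (hFpos x)
  refine ⟨f, hlip.continuous, fun x => (hpos x).ne', suc_of_lip hlip A, ?_⟩
  intro hsuc
  obtain ⟨δ, hδ, hδ2⟩ := hsuc 1 one_pos
  -- d m → 0, pick m with d m < δ
  have hd0 : Tendsto d atTop (nhds 0) := by
    apply squeeze_zero (fun m => (hdpos m).le) (fun m => (hdsmall m).le)
    have : Tendsto (fun m : ℕ => isolFn (c m) + 1/(m+1)) atTop (nhds (0 + 0)) :=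
      hiso0.add tendsto_one_div_add_atTop_nhds_zero_nat
    simpa using this
  obtain ⟨m, hm⟩ := (hd0.eventually_lt_const hδ).exists
  -- the two estimates
  have hfcm : f (c m) ≤ t m := by
    have := hFle (c m) m
    rw [dist_self] at this
    calc f (c m) ≤ F (c m) := min_le_right _ _
      _ ≤ t m + 0 := by simpa using this
      _ = t m := by ring
  have hfbm : 3/4 * d m ≤ f (b m) := by
    apply le_min
    · have := hd1 m; linarith
    · apply le_ciInf
      intro j
      rcases eq_or_ne j m with rfl | hne
      · have hco : dist (b j) (c j) = d j := dist_comm (b j) (c j)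
        rw [hco]
        show 3/4 * d j ≤ d j / 4 + d j
        have := hdpos j
        linarith
      · have hsepj := hsep m j (Ne.symm hne)
        have htri : dist (c m) (c j) ≤ dist (c m) (b m) + dist (b m) (c j) :=
          dist_triangle _ _ _
        have h1 : e - d m ≤ dist (b m) (c j) := by
          simp only [hd] at htri ⊢
          linarith
        have h2 := hde m
        have h3 := (htpos j).le
        have := hdpos m
        linarith
  have hbig : (1:ℝ) ≤ dist (f (c m))⁻¹ (f (b m))⁻¹ := by
    have h1 : (t m)⁻¹ ≤ (f (c m))⁻¹ := inv_anti₀ (hpos (c m)) hfcm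
    have h2 : (f (b m))⁻¹ ≤ (3/4 * d m)⁻¹ := by
      apply inv_anti₀ _ hfbm
      have := hdpos m; linarith
    have e1 : (t m)⁻¹ = 4 / d m := by
      simp only [ht]; rw [inv_div]
    have e2 : (3/4 * d m)⁻¹ = 4 / (3 * d m) := by
      rw [show (3:ℝ)/4 * d m = 3 * d m / 4 by ring, inv_div]
    rw [e1] at h1
    rw [e2] at h2
    have hdm := hdpos m
    have h3 : 4 / (3 * d m) + 1 ≤ 4 / d m := by
      rw [div_add' _ _ _ (by linarith : (3 * d m) ≠ 0), div_le_div_iff₀ (by linarith) hdm]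
      nlinarith [hd1 m]
    have : (1:ℝ) ≤ (f (c m))⁻¹ - (f (b m))⁻¹ := by linarith
    rw [Real.dist_eq]
    calc (1:ℝ) ≤ (f (c m))⁻¹ - (f (b m))⁻¹ := this
      _ ≤ |(f (c m))⁻¹ - (f (b m))⁻¹| := le_abs_self _
  exact absurd (hδ2 (c m) (b m) hm (Or.inl (hcA m))) (not_lt.mpr hbig)


theorem ucSet_iff_reciprocal_strongUnifCont {X : Type u} [MetricSpace X]
    (A : Set X) (hA : A.Nonempty) :
    UCSet A ↔
      ∀ f : X → ℝ, Continuous f → (∀ x : X, f x ≠ 0) → StrongUnifContOn f A →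
        StrongUnifContOn (fun x => (f x)⁻¹) A := by
  constructor
  · intro hUC f hc hnz _
    exact forward hUC f hc hnz
  · intro hf
    by_contra hUC
    unfold UCSet at hUC
    push_neg at hUC
    obtain ⟨a, haA, haiso, hncl⟩ := hUC
    have hnonemp : ∀ x : X, Set.Nonempty {y : X | y ≠ x} := by
      intro x
      by_contra hemp
      rw [Set.not_nonempty_iff_eq_empty] at hemp
      have hall : ∀ y : X, y = x := by
        intro y
        have := Set.eq_empty_iff_forall_notMem.mp hemp y
        simpa using this
      apply hncl x
      have hconst : Tendsto a atTop (nhds x) := by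
        have : a = fun _ => x := funext fun n => hall (a n)
        rw [this]; exact tendsto_const_nhds
      exact clusterPt_of_subseq strictMono_id hconst
    have hcounter : ∃ f : X → ℝ, Continuous f ∧ (∀ x, f x ≠ 0) ∧ StrongUnifContOn f A ∧
        ¬ StrongUnifContOn (fun x => (f x)⁻¹) A := by
      rcases cauchy_or_separated a with ⟨e, he, φ, hφ, hsep⟩ | ⟨φ, hφ, hcauchy⟩
      · -- separated case
        have hminpos : (0:ℝ) < min (e/4) 1 := lt_min (by linarith) one_pos
        obtain ⟨N, hN⟩ := eventually_atTop.mp (haiso.eventually_lt_const hminpos)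
        set ψ : ℕ → ℕ := fun m => φ (m + N) with hψdef
        have hψ : StrictMono ψ := fun i j h => hφ (by omega)
        set c : ℕ → X := fun m => a (ψ m) with hcdef
        have hsep' : ∀ i j, i ≠ j → e ≤ dist (c i) (c j) := by
          intro i j hij
          rcases lt_or_gt_of_ne hij with h | h
          · exact hsep (i + N) (j + N) (by omega)
          · rw [dist_comm]
            exact hsep (j + N) (i + N) (by omega)
        have hisos : ∀ m, isolFn (c m) < min (e/4) 1 := by
          intro m
          apply hN (ψ m)
          calc N ≤ m + N := by omega
            _ ≤ ψ m := hφ.le_apply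
        have hiso0 : Tendsto (fun m => isolFn (c m)) atTop (nhds 0) :=
          haiso.comp hψ.tendsto_atTop
        exact caseB he (fun m => haA _) hsep' hisos hiso0 (fun m => hnonemp _)
      · -- Cauchy case
        have hnl : ∀ p : X, ¬ Tendsto (a ∘ φ) atTop (nhds p) :=
          fun p h => hncl p (clusterPt_of_subseq hφ h)
        exact caseA (fun m => haA _) hcauchy hnl
    obtain ⟨f, h1, h2, h3, h4⟩ := hcounter
    exact h4 (hf f h1 h2 h3)
end
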